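/- If I is a small filtered category, then there exists a cofinite directed poset J together with a cofinal functor J → I. -/
import Mathlib


open CategoryTheory

universe u


namespace CofinalAux

attribute [local instance] Classical.propDecidable

variable {I : Type u} [SmallCategory I] [IsFiltered I]

/-- An element of the poset: a finite set of objects and a finite set of arrows. -/
structure Elt (I : Type u) [SmallCategory I] : Type u where
  objs : Finset I
  mors : Finset (Σ X Y : I, X ⟶ Y)

variable (I) in
lemma exists_cocone (e : Elt I) :
    ∃ (v : I) (k : ∀ X ∈ e.objs, X ⟶ v),
      ∀ (X Y : I) (f : X ⟶ Y), (⟨X, Y, f⟩ : Σ X Y : I, X ⟶ Y) ∈ e.mors →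
        ∀ (mX : X ∈ e.objs) (mY : Y ∈ e.objs), f ≫ k Y mY = k X mX := by
  classical
  let H : Finset (Σ' (X Y : I) (_ : X ∈ e.objs) (_ : Y ∈ e.objs), X ⟶ Y) :=
    (e.mors.filter (fun m => m.1 ∈ e.objs ∧ m.2.1 ∈ e.objs)).attach.image
      (fun m => ⟨m.1.1, m.1.2.1,
        (Finset.mem_filter.mp m.2).2.1, (Finset.mem_filter.mp m.2).2.2, m.1.2.2⟩)
  obtain ⟨S, T, hT⟩ := IsFiltered.sup_exists e.objs H
  refine ⟨S, fun X hX => T hX, ?_⟩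
  intro X Y f hf mX mY
  refine hT mX mY ?_
  simp only [H, Finset.mem_image]
  exact ⟨⟨⟨X, Y, f⟩, Finset.mem_filter.mpr ⟨hf, mX, mY⟩⟩, Finset.mem_attach _ _, rfl⟩

noncomputable def vertex (e : Elt I) : I := (exists_cocone I e).choose

noncomputable def leg (e : Elt I) (X : I) (h : X ∈ e.objs) : X ⟶ vertex e :=
  (exists_cocone I e).choose_spec.choose X h

lemma leg_comm (e : Elt I) {X Y : I} (f : X ⟶ Y)
    (hf : (⟨X, Y, f⟩ : Σ X Y : I, X ⟶ Y) ∈ e.mors)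
    (mX : X ∈ e.objs) (mY : Y ∈ e.objs) :
    f ≫ leg e Y mY = leg e X mX :=
  (exists_cocone I e).choose_spec.choose_spec X Y f hf mX mY

/-- The strict containment relation. -/
def P (e f : Elt I) : Prop :=
  e.objs ⊆ f.objs ∧ vertex e ∈ f.objs ∧ e.mors ⊆ f.mors ∧
    ∀ X (h : X ∈ e.objs), (⟨X, vertex e, leg e X h⟩ : Σ X Y : I, X ⟶ Y) ∈ f.mors

noncomputable instance : PartialOrder (Elt I) where
  le e f := e = f ∨ P e f
  le_refl e := Or.inl rfl
  le_trans e f g h h' := by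
    rcases h with rfl | h
    · exact h'
    · rcases h' with rfl | h'
      · exact Or.inr h
      · exact Or.inr ⟨h.1.trans h'.1, h'.1 h.2.1, h.2.2.1.trans h'.2.2.1,
          fun X hX => h'.2.2.1 (h.2.2.2 X hX)⟩
  le_antisymm e f h h' := by
    rcases h with rfl | h
    · rfl
    · rcases h' with rfl | h'
      · rfl
      · cases e; cases f
        simp only [Elt.mk.injEq]
        exact ⟨Finset.Subset.antisymm h.1 h'.1, Finset.Subset.antisymm h.2.2.1 h'.2.2.1⟩

noncomputable def umap {e f : Elt I} (h : e ≤ f) : vertex e ⟶ vertex f :=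
  if heq : e = f then eqToHom (congrArg vertex heq)
  else leg f (vertex e) ((h.resolve_left heq).2.1)

noncomputable def u : Elt I ⥤ I where
  obj := vertex
  map {e f} h := umap (leOfHom h)
  map_id e := by simp [umap]
  map_comp {e f g} h h' := by
    have h1 : e ≤ f := leOfHom h
    have h2 : f ≤ g := leOfHom h'
    by_cases hef : e = f
    · subst hef
      simp only [umap]
      rw [dif_pos trivial]
      simp
    · by_cases hfg : f = g
      · subst hfg
        simp only [umap]
        rw [dif_pos trivial]
        simp
      · have heg : e ≠ g := by
          rintro rfl
          exact hef (le_antisymm h1 h2)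
        have P1 := h1.resolve_left hef
        have P2 := h2.resolve_left hfg
        simp only [umap, dif_neg hef, dif_neg hfg, dif_neg heg]
        exact (leg_comm g (leg f (vertex e) P1.2.1)
          (P2.2.2.2 (vertex e) P1.2.1) (P2.1 P1.2.1) P2.2.1).symm

/-- The legs of the chosen cocone of `e`, as a finset of arrows. -/
noncomputable def legsFinset (e : Elt I) : Finset (Σ X Y : I, X ⟶ Y) :=
  e.objs.attach.image (fun X => ⟨X.1, vertex e, leg e X.1 X.2⟩)

lemma le_of_sub (e f : Elt I) (h1 : e.objs ⊆ f.objs) (h2 : vertex e ∈ f.objs)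
    (h3 : e.mors ⊆ f.mors) (h4 : legsFinset e ⊆ f.mors) : e ≤ f := by
  refine Or.inr ⟨h1, h2, h3, fun X hX => h4 ?_⟩
  exact Finset.mem_image.mpr ⟨⟨X, hX⟩, Finset.mem_attach _ _, rfl⟩

instance : IsDirected (Elt I) (· ≤ ·) := by
  constructor
  intro e f
  refine ⟨⟨(e.objs ∪ {vertex e}) ∪ (f.objs ∪ {vertex f}),
    (e.mors ∪ legsFinset e) ∪ (f.mors ∪ legsFinset f)⟩, ?_, ?_⟩
  · refine le_of_sub _ _ (fun x hx => ?_) (by simp) (fun x hx => ?_) (fun x hx => ?_) <;>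
      simp_all
  · refine le_of_sub _ _ (fun x hx => ?_) (by simp) (fun x hx => ?_) (fun x hx => ?_) <;>
      simp_all

lemma downset_finite (j : Elt I) : {k : Elt I | k ≤ j}.Finite := by
  have : {k : Elt I | k ≤ j} ⊆ (fun k : Elt I => (k.objs, k.mors)) ⁻¹'
      ↑(j.objs.powerset ×ˢ j.mors.powerset) := by
    intro k hk
    rcases hk with rfl | hk
    · simp
    · simp only [Set.mem_preimage, Finset.coe_product, Finset.mem_coe, Set.mem_prod,
        Finset.mem_powerset]
      exact ⟨hk.1, hk.2.2.1⟩
  refine Set.Finite.subset (Set.Finite.preimage ?_ (Finset.finite_toSet _)) this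
  intro a _ b _ hab
  cases a; cases b
  simpa using hab

lemma cofinal (i : I) : ∃ j : Elt I, Nonempty (i ⟶ (u (I := I)).obj j) :=
  ⟨⟨{i}, ∅⟩, ⟨leg _ i (Finset.mem_singleton_self i)⟩⟩

end CofinalAux

/-- For every small filtered category `I` there exist a cofinite directed
partial order `J` (directed: any two elements have an upper bound; cofinite: every element
has only finitely many elements below it) and a cofinal functor `u : J ⥤ I` (i.e. for every
`i : I` there are `j : J` and a morphism `i ⟶ u.obj j`). -/
theorem exists_cofinite_directed_cofinal (I : Type u) [SmallCategory I] [IsFiltered I] :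
    ∃ (J : Type u) (_ : PartialOrder J),
      IsDirected J (· ≤ ·) ∧
      (∀ j : J, {k : J | k ≤ j}.Finite) ∧
      ∃ u : J ⥤ I, ∀ i : I, ∃ j : J, Nonempty (i ⟶ u.obj j) := by
  exact ⟨CofinalAux.Elt I, inferInstance, inferInstance, CofinalAux.downset_finite,
    CofinalAux.u, CofinalAux.cofinal⟩
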